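/- Let n ≥ 2 be an integer and z = √n·e^{iφ} with φ ∈ (0, π) (so z ∉ ℝ and |z|² = n). Let x₀ = (n−1)/(2(z−1)) and define the width function h(α) = ((n−1)/2)·∑_{j=1}^∞ n^{−j/2}·|cos(α + jφ)| for α ∈ ℝ. Then the convex hull of F_z is characterized by the bounding halfplanes: convexHull(F_z) = { x ∈ ℂ : ∀ α ∈ ℝ, Re( e^{−iα}·(x − x₀) ) ≤ h(α) }. -/

import Mathlib

open Complex

/-- The fractional-part set `F_z` for base `z` and digits `{0,…,n-1}`. -/
def Fset (n : ℕ) (z : ℂ) : Set ℂ :=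
  { x | ∃ a : ℕ → ℕ, (∀ i, a i < n) ∧ x = ∑' i : ℕ, (a i : ℂ) * z⁻¹ ^ (i + 1) }

/- ### Auxiliary lemmas -/

lemma sum_ext_aux' {ι κ : Type*} {M : Type*} [Fintype ι] [Fintype κ] [AddCommMonoid M]
    (e : ι ↪ κ) (G : κ → M) (h0 : ∀ j, (∀ i, e i ≠ j) → G j = 0) :
    ∑ j, G j = ∑ i, G (e i) := by
  rw [← Finset.sum_map Finset.univ e G]
  refine (Finset.sum_subset (Finset.subset_univ _) ?_).symm
  intro j _ hj
  exact h0 j fun i hi => hj (Finset.mem_map.2 ⟨i, Finset.mem_univ i, hi⟩)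

lemma isCompact_convexHull_cx {s : Set ℂ} (hne : s.Nonempty) (hs : IsCompact s) :
    IsCompact (convexHull ℝ s) := by
  classical
  obtain ⟨p, hp⟩ := hne
  have hf : Continuous (fun q : (Fin 3 → ℝ) × (Fin 3 → ℂ) => ∑ i, q.1 i • q.2 i) := by
    apply continuous_finset_sum
    intro i _
    exact ((continuous_apply i).comp continuous_fst).smul
      ((continuous_apply i).comp continuous_snd)
  have hK : IsCompact ((stdSimplex ℝ (Fin 3)) ×ˢ (Set.univ.pi fun _ : Fin 3 => s)) :=
    IsCompact.prod (isCompact_stdSimplex (𝕜 := ℝ) (ι := Fin 3)) (isCompact_univ_pi fun _ => hs)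
  have himg : (fun q : (Fin 3 → ℝ) × (Fin 3 → ℂ) => ∑ i, q.1 i • q.2 i) ''
      ((stdSimplex ℝ (Fin 3)) ×ˢ (Set.univ.pi fun _ : Fin 3 => s))
      = convexHull ℝ s := by
    apply Set.Subset.antisymm
    · rintro - ⟨⟨w, x⟩, ⟨⟨hw0, hw1⟩, hx⟩, rfl⟩
      exact (convex_convexHull ℝ s).sum_mem (fun i _ => hw0 i) hw1
        (fun i _ => subset_convexHull ℝ s (hx i (Set.mem_univ i)))
    · intro y hy
      obtain ⟨ι, hfin, zz, ww, hrange, hai, hwpos, hwsum, hy⟩ :=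
        eq_pos_convex_span_of_mem_convexHull hy
      have hcard : Fintype.card ι ≤ 3 := by
        refine hai.card_le_finrank_succ.trans ?_
        have : Module.finrank ℝ (vectorSpan ℝ (Set.range zz)) ≤ Module.finrank ℝ ℂ :=
          Submodule.finrank_le _
        rw [Complex.finrank_real_complex] at this
        omega
      obtain ⟨e⟩ : Nonempty (ι ↪ Fin 3) :=
        Function.Embedding.nonempty_of_card_le (by simpa using hcard)
      have hwe : ∀ i, Function.extend e ww 0 (e i) = ww i :=
        fun i => e.injective.extend_apply ww 0 i
      have hze : ∀ i, Function.extend e zz (fun _ => p) (e i) = zz i :=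
        fun i => e.injective.extend_apply zz _ i
      have hoff : ∀ j, (∀ i, e i ≠ j) → Function.extend e ww 0 j = 0 := by
        intro j hj
        rw [Function.extend_apply' _ _ _ (fun ⟨i, hi⟩ => hj i hi)]; rfl
      refine ⟨(Function.extend e ww 0, Function.extend e zz fun _ => p),
        ⟨⟨?_, ?_⟩, ?_⟩, ?_⟩
      · intro j
        dsimp only
        by_cases hj : ∃ i, e i = j
        · obtain ⟨i, rfl⟩ := hj; rw [hwe]; exact (hwpos i).le
        · rw [hoff j (fun i hi => hj ⟨i, hi⟩)]
      · dsimp only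
        rw [sum_ext_aux' e _ hoff]
        rw [Finset.sum_congr rfl fun i _ => hwe i, hwsum]
      · intro j _
        dsimp only
        by_cases hj : ∃ i, e i = j
        · obtain ⟨i, rfl⟩ := hj; rw [hze]; exact hrange ⟨i, rfl⟩
        · rw [Function.extend_apply' _ _ _ hj]; exact hp
      · have := sum_ext_aux' e
          (fun j => Function.extend e ww 0 j • Function.extend e zz (fun _ => p) j)
          (fun j hj => by rw [hoff j hj, zero_smul])
        simp only at this ⊢
        rw [this, Finset.sum_congr rfl fun i _ => by rw [hwe, hze], hy]
  rw [← himg]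
  exact hK.image hf

section
variable {n : ℕ} {φ : ℝ} {z : ℂ}

lemma norm_z (hn : 2 ≤ n) (hz : z = (Real.sqrt n : ℂ) * Complex.exp (Complex.I * (φ : ℂ))) :
    ‖z‖ = Real.sqrt n := by
  rw [hz, norm_mul]
  simp [Complex.norm_exp, Complex.norm_real,
    _root_.abs_of_nonneg (Real.sqrt_nonneg _)]

lemma r_pos (hn : 2 ≤ n) : 0 < (Real.sqrt n)⁻¹ := by
  have : (0:ℝ) < n := by positivity
  positivity

lemma r_lt_one (hn : 2 ≤ n) : (Real.sqrt n)⁻¹ < 1 := by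
  rw [inv_lt_one_iff₀]
  right
  rw [show (1:ℝ) = Real.sqrt 1 by simp]
  apply Real.sqrt_lt_sqrt (by norm_num)
  exact_mod_cast by omega

lemma norm_z_inv_lt (hn : 2 ≤ n)
    (hz : z = (Real.sqrt n : ℂ) * Complex.exp (Complex.I * (φ : ℂ))) : ‖z⁻¹‖ < 1 := by
  rw [norm_inv, norm_z hn hz]
  exact inv_lt_one_of_one_lt₀ (by
    rw [show (1:ℝ) = Real.sqrt 1 by simp]
    apply Real.sqrt_lt_sqrt (by norm_num)
    exact_mod_cast by omega)

lemma term_re (hn : 2 ≤ n) (hz : z = (Real.sqrt n : ℂ) * Complex.exp (Complex.I * (φ : ℂ)))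
    (α : ℝ) (j : ℕ) :
    (Complex.exp (-Complex.I * (α : ℂ)) * z⁻¹ ^ (j + 1)).re
      = (Real.sqrt n)⁻¹ ^ (j + 1) * Real.cos (α + ((j : ℝ) + 1) * φ) := by
  have hs : (0:ℝ) < Real.sqrt n := Real.sqrt_pos.2 (by positivity)
  have hz' : z⁻¹ = ((((Real.sqrt n)⁻¹ : ℝ)) : ℂ) * Complex.exp (-(Complex.I * (φ : ℂ))) := by
    rw [hz, mul_inv, ← Complex.exp_neg, Complex.ofReal_inv]
  have hpow : z⁻¹ ^ (j+1) = (((((Real.sqrt n)⁻¹) ^ (j+1) : ℝ)) : ℂ)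
      * Complex.exp ((j+1 : ℕ) * (-(Complex.I * (φ : ℂ)))) := by
    rw [hz', mul_pow, Complex.exp_nat_mul, Complex.ofReal_pow]
  rw [hpow, show Complex.exp (-Complex.I * (α:ℂ)) *
      ((((((Real.sqrt n)⁻¹) ^ (j+1) : ℝ)) : ℂ) * Complex.exp ((j+1 : ℕ) * (-(Complex.I * (φ : ℂ)))))
      = (((((Real.sqrt n)⁻¹) ^ (j+1) : ℝ)) : ℂ) *
        (Complex.exp (-Complex.I * (α:ℂ)) * Complex.exp ((j+1 : ℕ) * (-(Complex.I * (φ : ℂ)))))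
      by ring, ← Complex.exp_add]
  rw [show -Complex.I * (α:ℂ) + (j+1 : ℕ) * (-(Complex.I * (φ : ℂ)))
      = ((-(α + ((j:ℝ)+1)*φ) : ℝ) : ℂ) * Complex.I by push_cast; ring]
  rw [Complex.re_ofReal_mul, Complex.exp_ofReal_mul_I_re, Real.cos_neg]

lemma rpow_conv (hn : 2 ≤ n) (j : ℕ) :
    (n:ℝ) ^ (-(((j:ℝ)+1)/2)) = ((Real.sqrt n)⁻¹)^(j+1) := by
  have h0 : (0:ℝ) ≤ n := by positivity
  rw [Real.sqrt_eq_rpow, ← Real.rpow_neg h0,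
    ← Real.rpow_natCast ((n:ℝ) ^ (-(1/2:ℝ))) (j+1), ← Real.rpow_mul h0]
  congr 1
  push_cast; ring

lemma sum_r (hn : 2 ≤ n) : Summable (fun j : ℕ => ((Real.sqrt n)⁻¹)^(j+1)) := by
  have := (summable_geometric_of_lt_one (r_pos hn).le (r_lt_one hn)).mul_left (Real.sqrt n)⁻¹
  exact this.congr fun j => (pow_succ' _ _).symm

lemma sum_real_aux (hn : 2 ≤ n) (t : ℕ → ℝ) (C : ℝ) (hC : ∀ j, |t j| ≤ C)
    (s : ℕ → ℝ) (hs : ∀ j, |s j| ≤ ((Real.sqrt n)⁻¹)^(j+1)) :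
    Summable (fun j : ℕ => t j * s j) := by
  have hC0 : 0 ≤ C := (abs_nonneg _).trans (hC 0)
  apply Summable.of_norm_bounded ((sum_r hn).mul_left C)
  intro j
  rw [Real.norm_eq_abs, abs_mul]
  exact mul_le_mul (hC j) (hs j) (abs_nonneg _) hC0

lemma sum_coef (hn : 2 ≤ n) (hz : z = (Real.sqrt n : ℂ) * Complex.exp (Complex.I * (φ : ℂ)))
    (t : ℕ → ℂ) (C : ℝ) (hC : ∀ j, ‖t j‖ ≤ C) :
    Summable (fun j : ℕ => t j * z⁻¹ ^ (j+1)) := by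
  have hg : Summable (fun j : ℕ => C * ‖z⁻¹‖^(j+1)) := by
    have := (summable_geometric_of_lt_one (norm_nonneg _) (norm_z_inv_lt hn hz)).mul_left ‖z⁻¹‖
    exact (this.congr fun j => (pow_succ' _ _).symm).mul_left C
  apply Summable.of_norm_bounded hg
  intro j
  rw [norm_mul, norm_pow]
  exact mul_le_mul_of_nonneg_right (hC j) (by positivity)

lemma x0_eq (hn : 2 ≤ n) (hz : z = (Real.sqrt n : ℂ) * Complex.exp (Complex.I * (φ : ℂ)))
    {x₀ : ℂ} (hx₀ : x₀ = ((n : ℂ) - 1) / (2 * (z - 1))) :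
    x₀ = ∑' j : ℕ, (((n:ℂ)-1)/2) * z⁻¹ ^ (j+1) := by
  have h1 : ‖z‖ > 1 := by
    rw [norm_z hn hz, show (1:ℝ) = Real.sqrt 1 by simp]
    apply Real.sqrt_lt_sqrt (by norm_num)
    exact_mod_cast by omega
  have hz0 : z ≠ 0 := by intro h; rw [h] at h1; simp at h1; linarith
  have hz1 : z - 1 ≠ 0 := by
    intro h
    rw [sub_eq_zero] at h
    rw [h] at h1; simp at h1
  have hgeo : ∑' j:ℕ, z⁻¹^j = (1 - z⁻¹)⁻¹ :=
    tsum_geometric_of_norm_lt_one (norm_z_inv_lt hn hz)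
  have hsum : ∑' j:ℕ, z⁻¹^(j+1) = z⁻¹ * (1-z⁻¹)⁻¹ := by
    rw [← hgeo, ← tsum_mul_left]
    exact tsum_congr fun j => (pow_succ' _ _)
  have hinv : z⁻¹ * (1-z⁻¹)⁻¹ = (z-1)⁻¹ := by
    rw [show (1 - z⁻¹) = (z-1) * z⁻¹ by field_simp, mul_inv, inv_inv]
    field_simp
  rw [tsum_mul_left, hsum, hinv, hx₀]
  field_simp

lemma re_expand (hn : 2 ≤ n) (hz : z = (Real.sqrt n : ℂ) * Complex.exp (Complex.I * (φ : ℂ)))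
    {x₀ : ℂ} (hx₀ : x₀ = ((n : ℂ) - 1) / (2 * (z - 1)))
    (t : ℕ → ℝ) (C : ℝ) (hC : ∀ j, |t j| ≤ C) (α : ℝ) :
    (Complex.exp (-Complex.I * (α:ℂ)) * ((∑' i : ℕ, ((t i : ℝ) : ℂ) * z⁻¹^(i+1)) - x₀)).re
      = ∑' j : ℕ, (t j - ((n:ℝ)-1)/2) *
          (((Real.sqrt n)⁻¹)^(j+1) * Real.cos (α + ((j:ℝ)+1)*φ)) := by
  have hsum_t : Summable (fun i : ℕ => ((t i : ℝ) : ℂ) * z⁻¹^(i+1)) :=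
    sum_coef hn hz _ C (fun j => by rw [Complex.norm_real]; exact hC j)
  have hsum_c : Summable (fun i : ℕ => (((n:ℂ)-1)/2) * z⁻¹^(i+1)) :=
    sum_coef hn hz _ ‖((n:ℂ)-1)/2‖ (fun j => le_refl _)
  have hsub : (∑' i : ℕ, ((t i : ℝ) : ℂ) * z⁻¹^(i+1)) - x₀
      = ∑' i : ℕ, (((t i : ℝ) : ℂ) - ((n:ℂ)-1)/2) * z⁻¹^(i+1) := by
    rw [x0_eq hn hz hx₀, ← Summable.tsum_sub hsum_t hsum_c]
    exact tsum_congr fun i => (sub_mul _ _ _).symm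
  have hsum_d : Summable (fun i : ℕ => (((t i : ℝ) : ℂ) - ((n:ℂ)-1)/2) * z⁻¹^(i+1)) :=
    sum_coef hn hz _ (C + ‖((n:ℂ)-1)/2‖) (fun j => by
      refine (norm_sub_le _ _).trans ?_
      rw [Complex.norm_real]
      exact add_le_add_left (hC j) _)
  rw [hsub, ← tsum_mul_left, Complex.re_tsum (hsum_d.mul_left _)]
  refine tsum_congr fun j => ?_
  rw [show Complex.exp (-Complex.I * (α:ℂ)) * ((((t j : ℝ) : ℂ) - ((n:ℂ)-1)/2) * z⁻¹^(j+1))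
      = ((t j - ((n:ℝ)-1)/2 : ℝ) : ℂ) * (Complex.exp (-Complex.I * (α:ℂ)) * z⁻¹^(j+1)) by
        push_cast; ring]
  rw [Complex.re_ofReal_mul, term_re hn hz]

lemma re_expand_nat (hn : 2 ≤ n)
    (hz : z = (Real.sqrt n : ℂ) * Complex.exp (Complex.I * (φ : ℂ)))
    {x₀ : ℂ} (hx₀ : x₀ = ((n : ℂ) - 1) / (2 * (z - 1)))
    (a : ℕ → ℕ) (ha : ∀ i, a i < n) (α : ℝ) :
    (Complex.exp (-Complex.I * (α:ℂ)) * ((∑' i : ℕ, ((a i : ℕ) : ℂ) * z⁻¹^(i+1)) - x₀)).re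
      = ∑' j : ℕ, (((a j : ℕ) : ℝ) - ((n:ℝ)-1)/2) *
          (((Real.sqrt n)⁻¹)^(j+1) * Real.cos (α + ((j:ℝ)+1)*φ)) := by
  have := re_expand hn hz hx₀ (fun i => ((a i : ℕ) : ℝ)) (n : ℝ)
    (fun j => by
      have h1 : ((a j : ℕ):ℝ) ≤ n := by exact_mod_cast (ha j).le
      simpa [Nat.abs_cast] using h1) α
  simpa using this

end

theorem stmt_19 (n : ℕ) (hn : 2 ≤ n) (φ : ℝ) (hφ : φ ∈ Set.Ioo 0 Real.pi)
    (z : ℂ) (hz : z = (Real.sqrt n : ℂ) * Complex.exp (Complex.I * (φ : ℂ)))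
    (x₀ : ℂ) (hx₀ : x₀ = ((n : ℂ) - 1) / (2 * (z - 1)))
    (h : ℝ → ℝ)
    (hh : ∀ α : ℝ, h α = ((n : ℝ) - 1) / 2 *
      ∑' j : ℕ, ((n : ℝ) ^ (-(((j : ℝ) + 1) / 2))) * |Real.cos (α + ((j : ℝ) + 1) * φ)|) :
    convexHull ℝ (Fset n z) =
      { x : ℂ | ∀ α : ℝ, (Complex.exp (-Complex.I * (α : ℂ)) * (x - x₀)).re ≤ h α } := by
  have hn1 : (1:ℝ) ≤ (n:ℝ) := by exact_mod_cast Nat.one_le_of_lt hn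
  -- rewrite h in terms of powers of r = (√n)⁻¹
  have h_eq : ∀ α : ℝ, h α = ∑' j : ℕ, (((n:ℝ)-1)/2) *
      (((Real.sqrt n)⁻¹)^(j+1) * |Real.cos (α + ((j:ℝ)+1)*φ)|) := by
    intro α
    rw [hh α, ← tsum_mul_left]
    refine tsum_congr fun j => ?_
    rw [rpow_conv hn j]
  have hdig : ∀ (a : ℕ → ℕ), (∀ i, a i < n) → ∀ j, |((a j : ℕ):ℝ) - ((n:ℝ)-1)/2| ≤ ((n:ℝ)-1)/2 := by
    intro a ha j
    have h1 : ((a j : ℕ):ℝ) ≤ (n:ℝ) - 1 := by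
      have := ha j
      have : ((a j : ℕ):ℝ) + 1 ≤ (n:ℝ) := by exact_mod_cast this
      linarith
    have h2 : (0:ℝ) ≤ ((a j : ℕ):ℝ) := by positivity
    rw [abs_le]; constructor <;> linarith
  have hsum_rhs : ∀ α : ℝ, Summable (fun j : ℕ => (((n:ℝ)-1)/2) *
      (((Real.sqrt n)⁻¹)^(j+1) * |Real.cos (α + ((j:ℝ)+1)*φ)|)) := by
    intro α
    apply sum_real_aux hn _ (((n:ℝ)-1)/2)
      (fun j => by rw [_root_.abs_of_nonneg (by linarith : (0:ℝ) ≤ ((n:ℝ)-1)/2)])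
    intro j
    rw [_root_.abs_of_nonneg (by positivity)]
    have : |Real.cos (α + ((j:ℝ)+1)*φ)| ≤ 1 := Real.abs_cos_le_one _
    nlinarith [pow_nonneg (r_pos hn).le (j+1)]
  have hsum_lhs : ∀ (a : ℕ → ℕ), (∀ i, a i < n) → ∀ α : ℝ,
      Summable (fun j : ℕ => (((a j : ℕ):ℝ) - ((n:ℝ)-1)/2) *
        (((Real.sqrt n)⁻¹)^(j+1) * Real.cos (α + ((j:ℝ)+1)*φ))) := by
    intro a ha α
    apply sum_real_aux hn _ (((n:ℝ)-1)/2) (hdig a ha)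
    intro j
    rw [abs_mul, _root_.abs_of_nonneg (pow_nonneg (r_pos hn).le (j+1))]
    have : |Real.cos (α + ((j:ℝ)+1)*φ)| ≤ 1 := Real.abs_cos_le_one _
    nlinarith [pow_nonneg (r_pos hn).le (j+1)]
  -- membership of Fset in the halfplane set
  have hFsub : Fset n z ⊆
      { x : ℂ | ∀ α : ℝ, (Complex.exp (-Complex.I * (α : ℂ)) * (x - x₀)).re ≤ h α } := by
    rintro y ⟨a, ha, rfl⟩ α
    rw [re_expand_nat hn hz hx₀ a ha α, h_eq α]
    refine Summable.tsum_le_tsum ?_ (hsum_lhs a ha α) (hsum_rhs α)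
    intro j
    calc (((a j : ℕ):ℝ) - ((n:ℝ)-1)/2) *
        (((Real.sqrt n)⁻¹)^(j+1) * Real.cos (α + ((j:ℝ)+1)*φ))
        ≤ |(((a j : ℕ):ℝ) - ((n:ℝ)-1)/2) *
          (((Real.sqrt n)⁻¹)^(j+1) * Real.cos (α + ((j:ℝ)+1)*φ))| := le_abs_self _
      _ = |((a j : ℕ):ℝ) - ((n:ℝ)-1)/2| *
          (((Real.sqrt n)⁻¹)^(j+1) * |Real.cos (α + ((j:ℝ)+1)*φ)|) := by
          rw [abs_mul, abs_mul, _root_.abs_of_nonneg (pow_nonneg (r_pos hn).le (j+1))]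
      _ ≤ (((n:ℝ)-1)/2) * (((Real.sqrt n)⁻¹)^(j+1) * |Real.cos (α + ((j:ℝ)+1)*φ)|) := by
          apply mul_le_mul_of_nonneg_right (hdig a ha j)
          positivity
  -- attainment of the bound
  have hattain : ∀ α : ℝ, ∃ y ∈ Fset n z,
      (Complex.exp (-Complex.I * (α : ℂ)) * (y - x₀)).re = h α := by
    intro α
    set a : ℕ → ℕ := fun j => if 0 ≤ Real.cos (α + ((j:ℝ)+1)*φ) then n-1 else 0 with ha_def
    have ha : ∀ i, a i < n := by
      intro i
      simp only [ha_def]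
      split <;> omega
    refine ⟨∑' i : ℕ, ((a i : ℕ) : ℂ) * z⁻¹ ^ (i + 1), ⟨a, ha, rfl⟩, ?_⟩
    rw [re_expand_nat hn hz hx₀ a ha α, h_eq α]
    refine tsum_congr fun j => ?_
    by_cases hc : 0 ≤ Real.cos (α + ((j:ℝ)+1)*φ)
    · have han : a j = n - 1 := by simp [ha_def, hc]
      have hcast : ((a j : ℕ):ℝ) = (n:ℝ) - 1 := by
        rw [han]; push_cast [Nat.cast_sub (by omega : 1 ≤ n)]; ring
      rw [hcast, _root_.abs_of_nonneg hc]
      ring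
    · have han : a j = 0 := by simp [ha_def, hc]
      have hcast : ((a j : ℕ):ℝ) = 0 := by rw [han]; simp
      rw [hcast, _root_.abs_of_neg (lt_of_not_ge hc)]
      ring
  -- compactness of Fset
  have hg : Continuous (fun a : ℕ → Fin n => ∑' i : ℕ, ((a i : ℕ) : ℂ) * z⁻¹ ^ (i + 1)) := by
    apply continuous_tsum
      (u := fun i : ℕ => (n : ℝ) * ‖z⁻¹‖^(i+1))
    · intro i
      exact Continuous.comp
        (continuous_of_discreteTopology (f := fun k : Fin n => ((k : ℕ) : ℂ) * z⁻¹ ^ (i+1)))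
        (continuous_apply i)
    · have := (summable_geometric_of_lt_one (norm_nonneg _)
        (norm_z_inv_lt hn hz)).mul_left ‖z⁻¹‖
      exact (this.congr fun j => (pow_succ' _ _).symm).mul_left _
    · intro i a
      rw [norm_mul, norm_pow, Complex.norm_natCast]
      apply mul_le_mul_of_nonneg_right _ (by positivity)
      exact_mod_cast (a i).is_lt.le
  have hFeq : Fset n z =
      Set.range (fun a : ℕ → Fin n => ∑' i : ℕ, ((a i : ℕ) : ℂ) * z⁻¹ ^ (i + 1)) := by
    ext x
    constructor
    · rintro ⟨a, ha, rfl⟩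
      exact ⟨fun i => ⟨a i, ha i⟩, rfl⟩
    · rintro ⟨b, rfl⟩
      exact ⟨fun i => (b i : ℕ), fun i => (b i).is_lt, rfl⟩
  have hcomp : IsCompact (Fset n z) := by
    rw [hFeq]; exact isCompact_range hg
  have hne : (Fset n z).Nonempty :=
    ⟨0, fun _ => 0, fun _ => lt_of_lt_of_le (by norm_num) hn, by simp⟩
  have hcl : IsClosed (convexHull ℝ (Fset n z)) :=
    (isCompact_convexHull_cx hne hcomp).isClosed
  -- main equality
  apply Set.Subset.antisymm
  · apply convexHull_min hFsub
    intro x hx y hy a b ha hb hab α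
    have hab' : (a:ℂ) + (b:ℂ) = 1 := by exact_mod_cast congrArg (Complex.ofReal) hab
    have key : Complex.exp (-Complex.I * (α:ℂ)) * ((a • x + b • y) - x₀)
        = (a:ℂ) * (Complex.exp (-Complex.I * (α:ℂ)) * (x - x₀))
          + (b:ℂ) * (Complex.exp (-Complex.I * (α:ℂ)) * (y - x₀)) := by
      simp only [Complex.real_smul]
      linear_combination (Complex.exp (-Complex.I * (α:ℂ)) * x₀) * hab'
    rw [key, Complex.add_re, Complex.re_ofReal_mul, Complex.re_ofReal_mul]
    have h1 := mul_le_mul_of_nonneg_left (hx α) ha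
    have h2 := mul_le_mul_of_nonneg_left (hy α) hb
    have h3 : a * h α + b * h α = h α := by rw [← add_mul, hab, one_mul]
    linarith
  · intro x hx
    by_contra hxK
    obtain ⟨f, u, hfu, hux⟩ :=
      geometric_hahn_banach_closed_point (convex_convexHull ℝ _) hcl hxK
    have hfre : ∀ v : ℂ, f v = (((f 1 : ℝ) - (f Complex.I : ℝ) * Complex.I) * v).re := by
      intro v
      have hv : f v = v.re * f 1 + v.im * f Complex.I := by
        conv_lhs => rw [← Complex.re_add_im v]
        rw [show ((v.re:ℂ) + (v.im:ℂ)*Complex.I) = v.re • (1:ℂ) + v.im • Complex.I by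
          simp [Complex.real_smul]]
        rw [map_add, map_smul, map_smul, smul_eq_mul, smul_eq_mul]
      rw [hv]
      simp [Complex.mul_re, Complex.sub_re, Complex.sub_im, Complex.mul_im]
      ring
    have h0K : (0:ℂ) ∈ convexHull ℝ (Fset n z) :=
      subset_convexHull ℝ _ ⟨fun _ => 0, fun _ => lt_of_lt_of_le (by norm_num) hn, by simp⟩
    by_cases hw0 : ((f 1 : ℝ) : ℂ) - (f Complex.I : ℝ) * Complex.I = 0
    · have h1 : f 0 < u := hfu 0 h0K
      have h2 : f 0 = 0 := map_zero f
      have h3 : f x = 0 := by rw [hfre x, hw0]; simp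
      linarith [hux]
    · set w : ℂ := ((f 1 : ℝ) : ℂ) - (f Complex.I : ℝ) * Complex.I with hw
      set α : ℝ := -Complex.arg w with hα
      have habs : (0:ℝ) < ‖w‖ := norm_pos_iff.mpr hw0
      have hexp : Complex.exp (-Complex.I * (α:ℂ)) = w / (‖w‖ : ℂ) := by
        rw [hα, show -Complex.I * ((-Complex.arg w : ℝ):ℂ)
          = ((Complex.arg w : ℝ) : ℂ) * Complex.I by push_cast; ring]
        rw [eq_div_iff (by exact_mod_cast habs.ne')]
        rw [mul_comm]
        exact Complex.norm_mul_exp_arg_mul_I w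
      have hkey : ∀ v : ℂ, (Complex.exp (-Complex.I*(α:ℂ)) * v).re
          = (‖w‖)⁻¹ * f v := by
        intro v
        rw [hexp, show w / ((‖w‖ : ℝ) : ℂ) * v
          = (((‖w‖)⁻¹ : ℝ) : ℂ) * (w * v) by
            push_cast; field_simp]
        rw [Complex.re_ofReal_mul, hfre v]
      obtain ⟨y, hyF, hyα⟩ := hattain α
      have hxle : (Complex.exp (-Complex.I*(α:ℂ)) * (x - x₀)).re
          ≤ (Complex.exp (-Complex.I*(α:ℂ)) * (y - x₀)).re := by
        rw [hyα]; exact hx α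
      rw [hkey, hkey] at hxle
      have h3 : f (x - x₀) ≤ f (y - x₀) :=
        (mul_le_mul_iff_right₀ (inv_pos.2 habs)).1 hxle
      rw [map_sub, map_sub] at h3
      have h4 : f y < u := hfu y (subset_convexHull ℝ _ hyF)
      linarith [hux]
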